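/- Let a, b ∈ ℝ with a ≠ 0 and b ≠ 0, and let v(θ) = (|cos(θ/2)|³/|a|³ + sin²(θ/2)/b²)^{−1/2} be the Gielis radius function with parameters m = 2, n₁ = 2, n₂ = 3, n₃ = 2, λ = 1 and phase 0. Then v is twice continuously differentiable, everywhere positive, 2π-periodic, and satisfies the strong convexity condition 2·v'(θ)² − v(θ)·v''(θ) + v(θ)² > 0 for all θ ∈ ℝ. -/

import Mathlib

open Real Filter

private lemma mulAbs_hasDerivAt (x : ℝ) : HasDerivAt (fun y : ℝ => y * |y|) (2 * |x|) x := by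
  rcases lt_trichotomy x 0 with hx | rfl | hx
  · have h1 : HasDerivAt (fun y : ℝ => -(y * y)) (2 * |x|) x := by
      have := ((hasDerivAt_id x).mul (hasDerivAt_id x)).neg
      refine this.congr_deriv ?_
      symm
      simp only [id_eq]
      rw [abs_of_neg hx]; ring
    apply h1.congr_of_eventuallyEq
    filter_upwards [Iio_mem_nhds hx] with y hy
    rw [abs_of_neg hy]; ring
  · rw [hasDerivAt_iff_tendsto_slope]
    have h2 : Tendsto (fun y : ℝ => |y|) (nhdsWithin (0:ℝ) {(0:ℝ)}ᶜ) (nhds 0) := by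
      have := continuous_abs.tendsto (0 : ℝ)
      simpa using this.mono_left nhdsWithin_le_nhds
    have h3 : (fun y : ℝ => |y|) =ᶠ[nhdsWithin (0:ℝ) {(0:ℝ)}ᶜ] slope (fun y : ℝ => y * |y|) 0 := by
      filter_upwards [self_mem_nhdsWithin] with y hy
      have hy' : y ≠ 0 := hy
      simp only [slope_def_field]
      field_simp
      ring
    have := h2.congr' h3
    simpa using this
  · have h1 : HasDerivAt (fun y : ℝ => y * y) (2 * |x|) x := by
      have := (hasDerivAt_id x).mul (hasDerivAt_id x)
      refine this.congr_deriv ?_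
      symm
      simp only [id_eq]
      rw [abs_of_pos hx]; ring
    apply h1.congr_of_eventuallyEq
    filter_upwards [Ioi_mem_nhds hx] with y hy
    rw [abs_of_pos hy]

private lemma absCube_hasDerivAt (x : ℝ) :
    HasDerivAt (fun y : ℝ => |y| ^ 3) (3 * (x * |x|)) x := by
  have h1 : HasDerivAt (fun y : ℝ => y * (y * |y|)) (1 * (x * |x|) + x * (2 * |x|)) x :=
    (hasDerivAt_id x).mul (mulAbs_hasDerivAt x)
  have h2 : (fun y : ℝ => |y| ^ 3) = fun y : ℝ => y * (y * |y|) := by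
    funext y
    rcases abs_cases y with ⟨h, _⟩ | ⟨h, _⟩ <;> rw [h] <;> ring
  rw [h2]
  convert h1 using 1
  ring

private lemma key_ineq (A B C Sn : ℝ) (hA : 0 < A) (hB : 0 < B) (hpy : C ^ 2 + Sn ^ 2 = 1) :
    0 < 4 * (|C| ^ 3 / A + Sn ^ 2 / B) ^ 2
      + 2 * (|C| ^ 3 / A + Sn ^ 2 / B) *
        ((C ^ 2 - Sn ^ 2) / (2 * B) - 3 / 2 * (C ^ 2 * |C| / 2 - Sn ^ 2 * |C|) / A)
      - (Sn * C / B - 3 / 2 * (Sn * (C * |C|)) / A) ^ 2 := by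
  set x := |C| with hxdef
  have hx0 : 0 ≤ x := abs_nonneg C
  have hx2 : C ^ 2 = x ^ 2 := (sq_abs C).symm
  have hs2 : Sn ^ 2 = 1 - x ^ 2 := by rw [hx2] at hpy; linarith
  have hx1 : x ≤ 1 := by nlinarith [sq_nonneg Sn]
  have hsq : (Sn * C / B - 3 / 2 * (Sn * (C * x)) / A) ^ 2
      = Sn ^ 2 * C ^ 2 * (1 / B - 3 / 2 * x / A) ^ 2 := by
    field_simp
  rw [hsq, hx2, hs2]
  rcases eq_or_lt_of_le hx0 with h0 | hxpos
  · rw [← h0]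
    have he : 4 * ((0:ℝ) ^ 3 / A + (1 - 0 ^ 2) / B) ^ 2
        + 2 * ((0:ℝ) ^ 3 / A + (1 - 0 ^ 2) / B) *
          ((0 ^ 2 - (1 - 0 ^ 2)) / (2 * B) - 3 / 2 * ((0:ℝ) ^ 2 * 0 / 2 - (1 - 0 ^ 2) * 0) / A)
        - (1 - 0 ^ 2) * (0:ℝ) ^ 2 * (1 / B - 3 / 2 * 0 / A) ^ 2 = 3 / B ^ 2 := by
      field_simp; ring
    rw [he]; positivity
  · have hcubic : 0 < 3 + 5 / 2 * x ^ 2 - 9 / 2 * x ^ 4 := by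
      nlinarith [mul_nonneg (by nlinarith : (0:ℝ) ≤ 1 - x ^ 2)
        (by positivity : (0:ℝ) ≤ 2 + 9 / 2 * x ^ 2)]
    have hiden : 4 * (x ^ 3 / A + (1 - x ^ 2) / B) ^ 2
        + 2 * (x ^ 3 / A + (1 - x ^ 2) / B) *
          ((x ^ 2 - (1 - x ^ 2)) / (2 * B) - 3 / 2 * (x ^ 2 * x / 2 - (1 - x ^ 2) * x) / A)
        - (1 - x ^ 2) * x ^ 2 * (1 / B - 3 / 2 * x / A) ^ 2
        = (3 * (A * (1 - x ^ 2)) ^ 2 + A * B * (x * (3 + 5 / 2 * x ^ 2 - 9 / 2 * x ^ 4))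
            + (3 / 4 + 7 / 4 * x ^ 2) * (B * x ^ 2) ^ 2) / (A ^ 2 * B ^ 2) := by
      field_simp; ring
    rw [hiden]
    apply div_pos _ (by positivity)
    have t1 : 0 ≤ 3 * (A * (1 - x ^ 2)) ^ 2 := by positivity
    have t2 : 0 < A * B * (x * (3 + 5 / 2 * x ^ 2 - 9 / 2 * x ^ 4)) :=
      mul_pos (mul_pos hA hB) (mul_pos hxpos hcubic)
    have t3 : 0 ≤ (3 / 4 + 7 / 4 * x ^ 2) * (B * x ^ 2) ^ 2 := by positivity
    linarith

private noncomputable def gg (a b t : ℝ) : ℝ :=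
  |Real.cos (t / 2)| ^ 3 / |a| ^ 3 + Real.sin (t / 2) ^ 2 / b ^ 2

private noncomputable def gg1 (a b t : ℝ) : ℝ :=
  Real.sin (t / 2) * Real.cos (t / 2) / b ^ 2
    - 3 / 2 * (Real.sin (t / 2) * (Real.cos (t / 2) * |Real.cos (t / 2)|)) / |a| ^ 3

private noncomputable def gg2 (a b t : ℝ) : ℝ :=
  (Real.cos (t / 2) ^ 2 - Real.sin (t / 2) ^ 2) / (2 * b ^ 2)
    - 3 / 2 * (Real.cos (t / 2) ^ 2 * |Real.cos (t / 2)| / 2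
        - Real.sin (t / 2) ^ 2 * |Real.cos (t / 2)|) / |a| ^ 3

private noncomputable def vv1 (a b t : ℝ) : ℝ :=
  -(gg1 a b t) / (2 * gg a b t * Real.sqrt (gg a b t))

private noncomputable def vv2 (a b t : ℝ) : ℝ :=
  -(gg2 a b t) / (2 * gg a b t * Real.sqrt (gg a b t))
    + 3 * gg1 a b t ^ 2 / (4 * gg a b t ^ 2 * Real.sqrt (gg a b t))

private lemma gg_pos {a b : ℝ} (ha : a ≠ 0) (hb : b ≠ 0) (t : ℝ) : 0 < gg a b t := by
  unfold gg
  have hA : (0:ℝ) < |a| ^ 3 := by positivity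
  have hB : (0:ℝ) < b ^ 2 := by positivity
  rcases eq_or_ne (Real.cos (t / 2)) 0 with h | h
  · have hs : Real.sin (t / 2) ≠ 0 := by
      intro h'
      have := Real.sin_sq_add_cos_sq (t / 2)
      rw [h, h'] at this; norm_num at this
    have h1 : 0 < Real.sin (t / 2) ^ 2 / b ^ 2 := by positivity
    have h2 : 0 ≤ |Real.cos (t / 2)| ^ 3 / |a| ^ 3 := by positivity
    linarith
  · have h1 : 0 < |Real.cos (t / 2)| ^ 3 / |a| ^ 3 :=
      div_pos (pow_pos (abs_pos.mpr h) 3) hA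
    have h2 : 0 ≤ Real.sin (t / 2) ^ 2 / b ^ 2 := by positivity
    linarith

private lemma hasDerivAt_half (t : ℝ) : HasDerivAt (fun s : ℝ => s / 2) (1 / 2) t := by
  simpa using (hasDerivAt_id t).div_const 2

private lemma hasDerivAt_cos_half (t : ℝ) :
    HasDerivAt (fun s : ℝ => Real.cos (s / 2)) (-Real.sin (t / 2) * (1 / 2)) t :=
  by have h := (Real.hasDerivAt_cos (t / 2)).comp t (hasDerivAt_half t); exact h

private lemma hasDerivAt_sin_half (t : ℝ) :
    HasDerivAt (fun s : ℝ => Real.sin (s / 2)) (Real.cos (t / 2) * (1 / 2)) t :=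
  by have h := (Real.hasDerivAt_sin (t / 2)).comp t (hasDerivAt_half t); exact h

private lemma hasDerivAt_gg (a b t : ℝ) : HasDerivAt (gg a b) (gg1 a b t) t := by
  have h1 := ((absCube_hasDerivAt (Real.cos (t / 2))).comp t (hasDerivAt_cos_half t)).div_const
    (|a| ^ 3)
  have h2 := ((hasDerivAt_sin_half t).pow 2).div_const (b ^ 2)
  have h := h1.add h2
  have hfun : (fun s : ℝ =>
      ((fun y : ℝ => |y| ^ 3) ∘ fun s : ℝ => Real.cos (s / 2)) s / |a| ^ 3
        + Real.sin (s / 2) ^ 2 / b ^ 2) = gg a b := by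
    funext s; simp [gg, Function.comp]
  replace h : HasDerivAt (gg a b) _ t := h
  convert h using 1
  unfold gg1
  push_cast
  ring

private lemma hasDerivAt_gg1 (a b t : ℝ) : HasDerivAt (gg1 a b) (gg2 a b t) t := by
  have hca := (mulAbs_hasDerivAt (Real.cos (t / 2))).comp t (hasDerivAt_cos_half t)
  have h1 := ((hasDerivAt_sin_half t).mul (hasDerivAt_cos_half t)).div_const (b ^ 2)
  have h2 := (HasDerivAt.const_mul ((3:ℝ) / 2)
      ((hasDerivAt_sin_half t).mul hca)).div_const (|a| ^ 3)
  have h := h1.sub h2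
  have hfun : (fun s : ℝ =>
      Real.sin (s / 2) * Real.cos (s / 2) / b ^ 2
        - 3 / 2 * (Real.sin (s / 2) *
            ((fun y : ℝ => y * |y|) ∘ fun s : ℝ => Real.cos (s / 2)) s) / |a| ^ 3)
      = gg1 a b := by
    funext s; simp [gg1, Function.comp]
  replace h : HasDerivAt (gg1 a b) _ t := h
  convert h using 1
  unfold gg2
  simp only [Function.comp_apply]
  ring

private lemma sqrt_gg_pos {a b : ℝ} (ha : a ≠ 0) (hb : b ≠ 0) (t : ℝ) :
    0 < Real.sqrt (gg a b t) :=
  Real.sqrt_pos.mpr (gg_pos ha hb t)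

private lemma hasDerivAt_sqrt_gg {a b : ℝ} (ha : a ≠ 0) (hb : b ≠ 0) (t : ℝ) :
    HasDerivAt (fun s : ℝ => Real.sqrt (gg a b s))
      (1 / (2 * Real.sqrt (gg a b t)) * gg1 a b t) t :=
  (Real.hasDerivAt_sqrt (ne_of_gt (gg_pos ha hb t))).comp t (hasDerivAt_gg a b t)

private lemma hasDerivAt_vfun {a b : ℝ} (ha : a ≠ 0) (hb : b ≠ 0) (t : ℝ) :
    HasDerivAt (fun s : ℝ => (Real.sqrt (gg a b s))⁻¹) (vv1 a b t) t := by
  have h := (hasDerivAt_sqrt_gg ha hb t).inv (ne_of_gt (sqrt_gg_pos ha hb t))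
  refine h.congr_deriv ?_
  symm
  unfold vv1
  have hg := gg_pos ha hb t
  have hS2 : Real.sqrt (gg a b t) ^ 2 = gg a b t := Real.sq_sqrt hg.le
  set S := Real.sqrt (gg a b t) with hS
  have hSpos : 0 < S := sqrt_gg_pos ha hb t
  rw [← hS2]
  field_simp

private lemma hasDerivAt_vv1 {a b : ℝ} (ha : a ≠ 0) (hb : b ≠ 0) (t : ℝ) :
    HasDerivAt (vv1 a b) (vv2 a b t) t := by
  have hg := gg_pos ha hb t
  have hSpos := sqrt_gg_pos ha hb t
  have hden : HasDerivAt (fun s : ℝ => 2 * gg a b s * Real.sqrt (gg a b s))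
      (2 * gg1 a b t * Real.sqrt (gg a b t)
        + 2 * gg a b t * (1 / (2 * Real.sqrt (gg a b t)) * gg1 a b t)) t :=
    (HasDerivAt.const_mul (2:ℝ) (hasDerivAt_gg a b t)).mul (hasDerivAt_sqrt_gg ha hb t)
  have hdne : 2 * gg a b t * Real.sqrt (gg a b t) ≠ 0 :=
    ne_of_gt (mul_pos (mul_pos two_pos hg) hSpos)
  have h := ((hasDerivAt_gg1 a b t).neg).div hden hdne
  have hfun : (fun s : ℝ => -gg1 a b s / (2 * gg a b s * Real.sqrt (gg a b s))) = vv1 a b := by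
    funext s; simp [vv1]
  replace h : HasDerivAt (vv1 a b) _ t := h
  convert h using 1
  unfold vv2
  simp only [Pi.neg_apply]
  have hS2 : Real.sqrt (gg a b t) ^ 2 = gg a b t := Real.sq_sqrt hg.le
  set S := Real.sqrt (gg a b t) with hS
  rw [← hS2]
  field_simp
  ring

private lemma cont_cos_half : Continuous fun t : ℝ => Real.cos (t / 2) :=
  Real.continuous_cos.comp (continuous_id.div_const 2)

private lemma cont_sin_half : Continuous fun t : ℝ => Real.sin (t / 2) :=
  Real.continuous_sin.comp (continuous_id.div_const 2)

private lemma cont_gg (a b : ℝ) : Continuous (gg a b) := by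
  unfold gg
  exact ((cont_cos_half.abs.pow 3).div_const _).add ((cont_sin_half.pow 2).div_const _)

private lemma cont_gg1 (a b : ℝ) : Continuous (gg1 a b) := by
  unfold gg1
  exact ((cont_sin_half.mul cont_cos_half).div_const _).sub
    ((continuous_const.mul (cont_sin_half.mul (cont_cos_half.mul cont_cos_half.abs))).div_const _)

private lemma cont_gg2 (a b : ℝ) : Continuous (gg2 a b) := by
  unfold gg2
  exact (((cont_cos_half.pow 2).sub (cont_sin_half.pow 2)).div_const _).sub
    ((continuous_const.mul ((((cont_cos_half.pow 2).mul cont_cos_half.abs).div_const 2).sub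
      ((cont_sin_half.pow 2).mul cont_cos_half.abs))).div_const _)

private lemma cont_vv2 {a b : ℝ} (ha : a ≠ 0) (hb : b ≠ 0) : Continuous (vv2 a b) := by
  unfold vv2
  have hSc : Continuous fun t : ℝ => Real.sqrt (gg a b t) :=
    Real.continuous_sqrt.comp (cont_gg a b)
  apply Continuous.add
  · exact ((cont_gg2 a b).neg).div ((continuous_const.mul (cont_gg a b)).mul hSc)
      fun t => ne_of_gt (mul_pos (mul_pos two_pos (gg_pos ha hb t)) (sqrt_gg_pos ha hb t))
  · exact (continuous_const.mul ((cont_gg1 a b).pow 2)).div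
      ((continuous_const.mul ((cont_gg a b).pow 2)).mul hSc)
      fun t => ne_of_gt (mul_pos (mul_pos (by norm_num) (pow_pos (gg_pos ha hb t) 2))
        (sqrt_gg_pos ha hb t))

private lemma final_ineq {a b : ℝ} (ha : a ≠ 0) (hb : b ≠ 0) (t : ℝ) :
    0 < 2 * vv1 a b t ^ 2 - (Real.sqrt (gg a b t))⁻¹ * vv2 a b t
      + ((Real.sqrt (gg a b t))⁻¹) ^ 2 := by
  have hA : (0:ℝ) < |a| ^ 3 := by positivity
  have hB : (0:ℝ) < b ^ 2 := by positivity
  have hkey := key_ineq (|a| ^ 3) (b ^ 2) (Real.cos (t / 2)) (Real.sin (t / 2)) hA hB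
    (Real.cos_sq_add_sin_sq (t / 2))
  have hkey' : 0 < 4 * gg a b t ^ 2 + 2 * gg a b t * gg2 a b t - gg1 a b t ^ 2 := by
    unfold gg gg1 gg2
    convert hkey using 2
  have hg := gg_pos ha hb t
  unfold vv1 vv2
  have hS2 : Real.sqrt (gg a b t) ^ 2 = gg a b t := Real.sq_sqrt hg.le
  set S := Real.sqrt (gg a b t) with hS
  have hSpos : 0 < S := sqrt_gg_pos ha hb t
  set g1 := gg1 a b t
  set g2 := gg2 a b t
  rw [← hS2] at hkey' ⊢
  have h4 : 0 < (4 * (S ^ 2) ^ 2 + 2 * S ^ 2 * g2 - g1 ^ 2) / (4 * (S ^ 2) ^ 3) :=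
    div_pos hkey' (by positivity)
  convert h4 using 1
  field_simp
  ring

/-- The Gielis radius function
`v(θ) = (|cos(θ/2)|³/|a|³ + sin²(θ/2)/b²)^{−1/2}` (parameters `m = 2`, `n₁ = 2`,
`n₂ = 3`, `n₃ = 2`, `λ = 1`, phase `0`) is twice continuously differentiable,
everywhere positive, `2π`-periodic, and strongly convex:
`2 v'(θ)² − v(θ) v''(θ) + v(θ)² > 0` for all `θ`. -/
theorem gielis_radius_is_minkowski (a b : ℝ) (ha : a ≠ 0) (hb : b ≠ 0)
    (v : ℝ → ℝ)
    (hv : ∀ θ, v θ =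
      1 / Real.sqrt (|Real.cos (θ / 2)| ^ 3 / |a| ^ 3 + Real.sin (θ / 2) ^ 2 / b ^ 2)) :
    ContDiff ℝ 2 v ∧ (∀ θ, 0 < v θ) ∧ (∀ θ, v (θ + 2 * Real.pi) = v θ) ∧
      ∀ θ : ℝ, 0 < 2 * (deriv v θ) ^ 2 - v θ * deriv (deriv v) θ + (v θ) ^ 2 := by
  have hvl : v = fun θ => (Real.sqrt (gg a b θ))⁻¹ := by
    funext θ; rw [hv θ, one_div]; rfl
  subst hvl
  have hdv : deriv (fun θ : ℝ => (Real.sqrt (gg a b θ))⁻¹) = vv1 a b :=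
    funext fun t => (hasDerivAt_vfun ha hb t).deriv
  have hdv2 : deriv (vv1 a b) = vv2 a b :=
    funext fun t => (hasDerivAt_vv1 ha hb t).deriv
  refine ⟨?_, ?_, ?_, ?_⟩
  · rw [show (2 : WithTop ℕ∞) = 1 + 1 from rfl, contDiff_succ_iff_deriv]
    refine ⟨fun t => (hasDerivAt_vfun ha hb t).differentiableAt, ?_, ?_⟩
    · intro h; simp at h
    · rw [hdv, contDiff_one_iff_deriv]
      exact ⟨fun t => (hasDerivAt_vv1 ha hb t).differentiableAt,
        by rw [hdv2]; exact cont_vv2 ha hb⟩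
  · intro θ; exact inv_pos.mpr (sqrt_gg_pos ha hb θ)
  · intro θ
    show (Real.sqrt (gg a b (θ + 2 * Real.pi)))⁻¹ = (Real.sqrt (gg a b θ))⁻¹
    have hper : gg a b (θ + 2 * Real.pi) = gg a b θ := by
      unfold gg
      rw [show (θ + 2 * Real.pi) / 2 = θ / 2 + Real.pi by ring,
        Real.cos_add_pi, Real.sin_add_pi, abs_neg, neg_sq]
    rw [hper]
  · intro θ
    have h := final_ineq ha hb θ
    simp only [hdv, hdv2]
    exact h
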